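/- Let K be an H-graded field, G a finite group of graded automorphisms of K, L = K^G, R ⊆ R' graded valuation rings of L, and A' a graded valuation ring of K extending R'. Then there exists a graded valuation ring A of K extending R with A ⊆ A'. -/

import Mathlib

open scoped DirectSum

/-- An `H`-graded field: a nonzero commutative ring with an internal grading by the
commutative group `H` in which every nonzero homogeneous element is invertible
(with homogeneous inverse). -/
structure GradedField (H : Type*) [CommGroup H] [DecidableEq H] (K : Type*) [CommRing K] where
  comp : H → AddSubgroup K
  one_mem : (1 : K) ∈ comp 1
  mul_mem : ∀ {g h : H} {x y : K}, x ∈ comp g → y ∈ comp h → x * y ∈ comp (g * h)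
  isInternal : DirectSum.IsInternal fun h : H => comp h
  zero_ne_one : (0 : K) ≠ 1
  inv_mem : ∀ {h : H} {x : K}, x ∈ comp h → x ≠ 0 → ∃ y ∈ comp h⁻¹, x * y = 1

namespace GradedField

variable {H : Type*} [CommGroup H] [DecidableEq H] {K : Type*} [CommRing K] (F : GradedField H K)

/-- A homogeneous element. -/
def Homogeneous (x : K) : Prop := ∃ h, x ∈ F.comp h

/-- A subring is graded if each of its elements is a sum of homogeneous elements of the
subring. -/
def IsGradedSubring (R : Subring K) : Prop :=
  ∀ x ∈ R, x ∈ AddSubgroup.closure {y : K | y ∈ R ∧ F.Homogeneous y}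

/-- A graded subfield: a graded subring closed under inverses of nonzero homogeneous
elements. -/
structure IsGradedSubfield (L : Subring K) : Prop where
  graded : F.IsGradedSubring L
  inv_mem : ∀ x ∈ L, F.Homogeneous x → x ≠ 0 → Ring.inverse x ∈ L

/-- A graded valuation ring of the graded subfield `L`: a graded subring `R ⊆ L` such that
every nonzero homogeneous element of `L` lies in `R` or has its inverse in `R`. -/
def IsGradedValRing (L R : Subring K) : Prop :=
  R ≤ L ∧ F.IsGradedSubring R ∧
    ∀ x ∈ L, F.Homogeneous x → x ≠ 0 → (x ∈ R ∨ Ring.inverse x ∈ R)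

/-- The identity component `K₁`, as a subring. -/
def oneComponent : Subring K where
  carrier := F.comp 1
  one_mem' := F.one_mem
  mul_mem' := fun ha hb => by simpa using F.mul_mem ha hb
  add_mem' := fun ha hb => (F.comp 1).add_mem ha hb
  zero_mem' := (F.comp 1).zero_mem
  neg_mem' := fun ha => (F.comp 1).neg_mem ha

theorem mem_oneComponent {x : K} : x ∈ F.oneComponent ↔ x ∈ F.comp 1 := Iff.rfl

/-- The value group `ρ(L^×) ⊆ H` of a graded subfield `L`. -/
def valueGroup (L : Subring K)
    (hL : ∀ x ∈ L, F.Homogeneous x → x ≠ 0 → Ring.inverse x ∈ L) : Subgroup H where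
  carrier := {h | ∃ x ∈ F.comp h, x ≠ 0 ∧ x ∈ L}
  one_mem' := ⟨1, F.one_mem, Ne.symm F.zero_ne_one, L.one_mem⟩
  mul_mem' := by
    rintro g h ⟨x, hx, hx0, hxL⟩ ⟨y, hy, hy0, hyL⟩
    obtain ⟨x', hx', hxx'⟩ := F.inv_mem hx hx0
    obtain ⟨y', hy', hyy'⟩ := F.inv_mem hy hy0
    refine ⟨x * y, F.mul_mem hx hy, ?_, L.mul_mem hxL hyL⟩
    intro h0
    have h1 : x * y * (x' * y') = 1 := by rw [mul_mul_mul_comm, hxx', hyy', one_mul]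
    rw [h0, zero_mul] at h1
    exact F.zero_ne_one h1
  inv_mem' := by
    rintro g ⟨x, hx, hx0, hxL⟩
    obtain ⟨y, hy, hxy⟩ := F.inv_mem hx hx0
    have hu : IsUnit x := IsUnit.of_mul_eq_one y hxy
    have hyx : Ring.inverse x = y := by
      calc Ring.inverse x = Ring.inverse x * (x * y) := by rw [hxy, mul_one]
        _ = Ring.inverse x * x * y := by ring
        _ = y := by rw [Ring.inverse_mul_cancel x hu, one_mul]
    refine ⟨y, hy, ?_, ?_⟩
    · intro h0; rw [h0, mul_zero] at hxy; exact F.zero_ne_one hxy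
    · rw [← hyx]; exact hL x hxL ⟨g, hx⟩ hx0

/-- The value group `ρ(K^×)` of the whole graded field. -/
def fullValueGroup : Subgroup H :=
  F.valueGroup ⊤ (fun _ _ _ _ => Subring.mem_top _)

/-- `K₁` as a module over `L₁ = K₁ ∩ L`. -/
def oneSubmodule (L : Subring K) : Submodule ↥(F.oneComponent ⊓ L) K where
  carrier := F.comp 1
  add_mem' := fun ha hb => (F.comp 1).add_mem ha hb
  zero_mem' := (F.comp 1).zero_mem
  smul_mem' := fun c x hx => by
    have hc : (c : K) ∈ F.comp 1 := ((Subring.mem_inf).mp c.2).1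
    have := F.mul_mem hc hx
    simpa [Subring.smul_def] using this

/-- A graded automorphism: a ring automorphism preserving each graded component. -/
def IsGradedAut (σ : RingAut K) : Prop := ∀ (h : H) (x : K), x ∈ F.comp h → σ x ∈ F.comp h

end GradedField

/-- The fixed subring `K^G` of a group of ring automorphisms. -/
def fixedSubring {K : Type*} [CommRing K] (G : Subgroup (RingAut K)) : Subring K where
  carrier := {x | ∀ σ ∈ G, σ x = x}
  one_mem' := fun σ _ => map_one σ
  mul_mem' := fun ha hb σ hσ => by rw [map_mul, ha σ hσ, hb σ hσ]
  add_mem' := fun ha hb σ hσ => by rw [map_add, ha σ hσ, hb σ hσ]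
  zero_mem' := fun σ _ => map_zero σ
  neg_mem' := fun ha σ hσ => by rw [map_neg, ha σ hσ]

theorem mem_fixedSubring {K : Type*} [CommRing K] {G : Subgroup (RingAut K)} {x : K} :
    x ∈ fixedSubring G ↔ ∀ σ ∈ G, σ x = x := Iff.rfl


namespace GradedField

variable {H : Type*} [CommGroup H] [DecidableEq H] {K : Type*} [CommRing K]
variable (F : GradedField H K)

/-- Decomposition of an element into its homogeneous components. -/
noncomputable def decompose (x : K) : ⨁ h : H, ↥(F.comp h) :=
  (Equiv.ofBijective _ F.isInternal).symm x

/-- The degree-`h` homogeneous component of `x`. -/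
noncomputable def component (h : H) (x : K) : K := (F.decompose x h : K)

/-- The inertia subgroup of `G`: graded automorphisms in `G` acting trivially on `K₁`. -/
def inertia (G : Subgroup (RingAut K)) : Subgroup (RingAut K) where
  carrier := {σ | σ ∈ G ∧ ∀ x ∈ F.comp 1, σ x = x}
  one_mem' := ⟨G.one_mem, fun _ _ => rfl⟩
  mul_mem' := fun {a b} ha hb => ⟨G.mul_mem ha.1 hb.1, fun x hx => by
    show a (b x) = x
    rw [hb.2 x hx, ha.2 x hx]⟩
  inv_mem' := fun {a} ha => ⟨G.inv_mem ha.1, fun x hx => by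
    conv_lhs => rw [← ha.2 x hx]
    exact a.symm_apply_apply x⟩

theorem mem_inertia {G : Subgroup (RingAut K)} {σ : RingAut K} :
    σ ∈ F.inertia G ↔ σ ∈ G ∧ ∀ x ∈ F.comp 1, σ x = x := Iff.rfl

end GradedField

/-- A subring `S` containing a subring `L`, viewed as an `L`-submodule of the ambient ring. -/
def Subring.toSubmoduleOver {K : Type*} [CommRing K] (L S : Subring K) (hLS : L ≤ S) :
    Submodule ↥L K where
  carrier := S
  add_mem' := fun ha hb => S.add_mem ha hb
  zero_mem' := S.zero_mem
  smul_mem' := fun c x hx => S.mul_mem (hLS c.2) hx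

section ZR

variable {H : Type*} [CommGroup H] [DecidableEq H] {K : Type*} [CommRing K]

/-- The Zariski–Riemann space of graded valuation rings of `K` containing `k₀`. -/
def GradedField.ZR (F : GradedField H K) (k₀ : Subring K) : Type _ :=
  {O : Subring K // F.IsGradedValRing ⊤ O ∧ k₀ ≤ O}

/-- The set of homogeneous units (nonzero homogeneous elements) of `K`. -/
def GradedField.HomogUnits (F : GradedField H K) : Type _ :=
  {x : K // x ≠ 0 ∧ F.Homogeneous x}

open Classical in
/-- The embedding of the Zariski–Riemann space into `{0,1}^{K^×}` via characteristic
functions. -/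
noncomputable def GradedField.chi (F : GradedField H K) (k₀ : Subring K) (O : F.ZR k₀) :
    F.HomogUnits → Bool :=
  fun x => decide (x.1 ∈ O.1)

/-- Basic open sets `P{F}∖{G}` of the constructible topology, for finite sets `F`, `G` of
homogeneous units. -/
def GradedField.constructibleBasis (F : GradedField H K) (k₀ : Subring K) :
    Set (Set (F.ZR k₀)) :=
  {s | ∃ Fs Gs : Finset K, (∀ a ∈ Fs, a ≠ 0 ∧ F.Homogeneous a) ∧
    (∀ b ∈ Gs, b ≠ 0 ∧ F.Homogeneous b) ∧
    s = {O : F.ZR k₀ | (∀ a ∈ Fs, a ∈ O.1) ∧ ∀ b ∈ Gs, b ∉ O.1}}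

/-- The constructible topology on the Zariski–Riemann space. -/
def GradedField.constructibleTop (F : GradedField H K) (k₀ : Subring K) :
    TopologicalSpace (F.ZR k₀) :=
  TopologicalSpace.generateFrom (F.constructibleBasis k₀)

namespace GradedField

variable {H : Type*} [CommGroup H] [DecidableEq H] {K : Type*} [CommRing K] (F : GradedField H K)

lemma aux_coe_decompose (x : K) :
    (DirectSum.coeAddMonoidHom fun h : H => F.comp h) (F.decompose x) = x :=
  (Equiv.ofBijective _ F.isInternal).apply_symm_apply x

lemma aux_decompose_add (x y : K) :
    F.decompose (x + y) = F.decompose x + F.decompose y :=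
  F.isInternal.injective (by
    rw [map_add, aux_coe_decompose, aux_coe_decompose, aux_coe_decompose])

lemma aux_decompose_of_mem {g : H} {x : K} (hx : x ∈ F.comp g) :
    F.decompose x = DirectSum.of (fun h : H => ↥(F.comp h)) g ⟨x, hx⟩ :=
  F.isInternal.injective (by
    rw [aux_coe_decompose, DirectSum.coeAddMonoidHom_of])

lemma aux_cmp_of_mem {g : H} {x : K} (hx : x ∈ F.comp g) : F.component g x = x := by
  unfold GradedField.component
  rw [aux_decompose_of_mem F hx, DirectSum.of_eq_same]

lemma aux_cmp_of_ne {g d : H} {x : K} (hx : x ∈ F.comp d) (h : g ≠ d) :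
    F.component g x = 0 := by
  unfold GradedField.component
  rw [aux_decompose_of_mem F hx, DirectSum.of_eq_of_ne _ _ _ h]
  rfl

lemma aux_cmp_mem (g : H) (x : K) : F.component g x ∈ F.comp g := (F.decompose x g).2

lemma aux_cmp_add (g : H) (x y : K) :
    F.component g (x + y) = F.component g x + F.component g y := by
  unfold GradedField.component
  rw [aux_decompose_add]
  rfl

lemma aux_decompose_zero : F.decompose (0 : K) = 0 :=
  F.isInternal.injective (by rw [aux_coe_decompose, map_zero])

lemma aux_cmp_zero (g : H) : F.component g (0 : K) = 0 := by
  unfold GradedField.component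
  rw [aux_decompose_zero]
  rfl

/-- The component map as an additive group homomorphism. -/
noncomputable def cmpHom (g : H) : K →+ K where
  toFun := F.component g
  map_zero' := aux_cmp_zero F g
  map_add' := aux_cmp_add F g

@[simp] lemma cmpHom_apply (g : H) (x : K) : F.cmpHom g x = F.component g x := rfl

lemma aux_exists_rep (x : K) : ∃ s : Finset H,
    (∀ g ∉ s, F.component g x = 0) ∧ x = ∑ g ∈ s, F.component g x := by
  classical
  refine ⟨(F.decompose x).support, fun g hg => ?_, ?_⟩
  · have h0 : F.decompose x g = 0 := DFinsupp.notMem_support_iff.mp hg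
    unfold GradedField.component
    rw [h0]; rfl
  · calc x = (DirectSum.coeAddMonoidHom fun h : H => F.comp h) (F.decompose x) :=
        (aux_coe_decompose F x).symm
    _ = (DirectSum.coeAddMonoidHom fun h : H => F.comp h)
        (∑ g ∈ (F.decompose x).support,
          DirectSum.of (fun h : H => ↥(F.comp h)) g (F.decompose x g)) := by
        rw [DirectSum.sum_support_of]
    _ = ∑ g ∈ (F.decompose x).support, F.component g x := by
        rw [map_sum]
        exact Finset.sum_congr rfl fun g _ => by rw [DirectSum.coeAddMonoidHom_of]; rfl

end GradedField
namespace GradedField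

variable {H : Type*} [CommGroup H] [DecidableEq H] {K : Type*} [CommRing K] (F : GradedField H K)

/-- Projection formula: component of a product with a homogeneous element. -/
lemma aux_proj {d : H} {z : K} (hz : z ∈ F.comp d) (b : K) (g : H) :
    F.component g (b * z) = F.component (g * d⁻¹) b * z := by
  classical
  obtain ⟨s, hout, hb⟩ := F.aux_exists_rep b
  have hbz : b * z = ∑ u ∈ s, F.component u b * z := by
    rw [← Finset.sum_mul, ← hb]
  have key : ∀ u : H, F.component g (F.component u b * z) =
      if u = g * d⁻¹ then F.component u b * z else 0 := by
    intro u
    have hmem : F.component u b * z ∈ F.comp (u * d) :=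
      F.mul_mem (F.aux_cmp_mem u b) hz
    by_cases hu : u = g * d⁻¹
    · subst hu
      rw [if_pos rfl]
      exact F.aux_cmp_of_mem (by rwa [inv_mul_cancel_right] at hmem)
    · rw [if_neg hu]
      refine F.aux_cmp_of_ne hmem fun hgu => hu ?_
      rw [hgu, mul_inv_cancel_right]
  calc F.component g (b * z) = ∑ u ∈ s, F.component g (F.component u b * z) := by
        rw [hbz, ← cmpHom_apply, map_sum]; rfl
  _ = ∑ u ∈ s, if u = g * d⁻¹ then F.component u b * z else 0 :=
        Finset.sum_congr rfl fun u _ => key u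
  _ = if g * d⁻¹ ∈ s then F.component (g * d⁻¹) b * z else 0 := Finset.sum_ite_eq' s _ _
  _ = F.component (g * d⁻¹) b * z := by
        by_cases hs : g * d⁻¹ ∈ s
        · rw [if_pos hs]
        · rw [if_neg hs, hout _ hs, zero_mul]

/-- Uniqueness of inverses. -/
lemma aux_inv_unique {x y : K} (h : x * y = 1) : Ring.inverse x = y := by
  have hu : IsUnit x := IsUnit.of_mul_eq_one y h
  calc Ring.inverse x = Ring.inverse x * (x * y) := by rw [h, mul_one]
  _ = Ring.inverse x * x * y := by ring
  _ = y := by rw [Ring.inverse_mul_cancel x hu, one_mul]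

lemma aux_hom_inv {g : H} {x : K} (hx : x ∈ F.comp g) (hx0 : x ≠ 0) :
    x * Ring.inverse x = 1 ∧ Ring.inverse x ∈ F.comp g⁻¹ ∧ Ring.inverse x ≠ 0 := by
  obtain ⟨y, hy, hxy⟩ := F.inv_mem hx hx0
  have hinv : Ring.inverse x = y := aux_inv_unique hxy
  refine ⟨by rw [hinv]; exact hxy, by rw [hinv]; exact hy, ?_⟩
  rw [hinv]
  intro h0
  rw [h0, mul_zero] at hxy
  exact F.zero_ne_one hxy

/-- A subring closure of a set of homogeneous elements is graded. -/
lemma aux_closure_graded {s : Set K} (hs : ∀ x ∈ s, F.Homogeneous x) :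
    F.IsGradedSubring (Subring.closure s) := by
  intro x hx
  set T : Set K := {y : K | y ∈ Subring.closure s ∧ F.Homogeneous y} with hT
  have hmulT : ∀ a ∈ AddSubgroup.closure T, ∀ b ∈ AddSubgroup.closure T,
      a * b ∈ AddSubgroup.closure T := by
    intro a ha
    induction ha using AddSubgroup.closure_induction with
    | mem a haT =>
      intro b hb
      induction hb using AddSubgroup.closure_induction with
      | mem b hbT =>
        refine AddSubgroup.subset_closure ⟨Subring.mul_mem _ haT.1 hbT.1, ?_⟩
        obtain ⟨g, hg⟩ := haT.2
        obtain ⟨h, hh⟩ := hbT.2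
        exact ⟨g * h, F.mul_mem hg hh⟩
      | zero => rw [mul_zero]; exact AddSubgroup.zero_mem _
      | add b c _ _ ihb ihc => rw [mul_add]; exact AddSubgroup.add_mem _ ihb ihc
      | neg b _ ihb => rw [mul_neg]; exact AddSubgroup.neg_mem _ ihb
    | zero => intro b _; rw [zero_mul]; exact AddSubgroup.zero_mem _
    | add a c _ _ iha ihc => intro b hb; rw [add_mul]; exact AddSubgroup.add_mem _ (iha b hb) (ihc b hb)
    | neg a _ iha => intro b hb; rw [neg_mul]; exact AddSubgroup.neg_mem _ (iha b hb)
  induction hx using Subring.closure_induction with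
  | mem y hy => exact AddSubgroup.subset_closure ⟨Subring.subset_closure hy, hs y hy⟩
  | zero => exact AddSubgroup.zero_mem _
  | one => exact AddSubgroup.subset_closure ⟨Subring.one_mem _, ⟨1, F.one_mem⟩⟩
  | add a b _ _ iha ihb => exact AddSubgroup.add_mem _ iha ihb
  | neg a _ iha => exact AddSubgroup.neg_mem _ iha
  | mul a b _ _ iha ihb => exact hmulT a iha b ihb

/-- Components of elements of a graded subring stay in the subring. -/
lemma aux_cmp_mem_of_graded {B : Subring K} (hB : F.IsGradedSubring B) {x : K}
    (hx : x ∈ B) (g : H) : F.component g x ∈ B := by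
  have h := hB x hx
  clear hx
  induction h using AddSubgroup.closure_induction with
  | mem y hy =>
    obtain ⟨hyB, d, hd⟩ := hy
    by_cases hgd : g = d
    · rw [hgd, F.aux_cmp_of_mem hd]; exact hyB
    · rw [F.aux_cmp_of_ne hd hgd]; exact B.zero_mem
  | zero => rw [F.aux_cmp_zero]; exact B.zero_mem
  | add a b _ _ iha ihb => rw [F.aux_cmp_add]; exact B.add_mem iha ihb
  | neg a _ iha =>
    have hneg : F.component g (-a) = - F.component g a := map_neg (F.cmpHom g) a
    rw [hneg]; exact B.neg_mem iha

end GradedField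
namespace GradedField

variable {H : Type*} [CommGroup H] [DecidableEq H] {K : Type*} [CommRing K] (F : GradedField H K)

/-- The set of elements of a subring that are zero or have no inverse in the subring. -/
def auxNU (S : Subring K) : Set K := {x : K | x ∈ S ∧ (x = 0 ∨ Ring.inverse x ∉ S)}

lemma auxNU_zero (S : Subring K) : (0 : K) ∈ auxNU S := ⟨S.zero_mem, Or.inl rfl⟩

lemma aux_NU_mul {S : Subring K} {u d : H} {b m : K} (hb : b ∈ F.comp u)
    (hbS : b ∈ S) (hm : m ∈ F.comp d) (hmNU : m ∈ auxNU S) : b * m ∈ auxNU S := by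
  refine ⟨S.mul_mem hbS hmNU.1, ?_⟩
  by_cases h0 : b * m = 0
  · exact Or.inl h0
  · refine Or.inr fun hw => ?_
    have hm0 : m ≠ 0 := fun h => h0 (by rw [h, mul_zero])
    have hmNU2 : Ring.inverse m ∉ S := hmNU.2.resolve_left hm0
    have hbm := F.aux_hom_inv (F.mul_mem hb hm) h0
    have heq : Ring.inverse m = b * Ring.inverse (b * m) :=
      aux_inv_unique (by
        rw [show m * (b * Ring.inverse (b * m)) = b * m * Ring.inverse (b * m) by ring, hbm.1])
    exact hmNU2 (heq ▸ S.mul_mem hbS hw)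

lemma aux_NU_neg {S : Subring K} {g : H} {x : K} (hx : x ∈ F.comp g)
    (hxNU : x ∈ auxNU S) : -x ∈ auxNU S := by
  refine ⟨S.neg_mem hxNU.1, ?_⟩
  by_cases h0 : x = 0
  · subst h0; exact Or.inl neg_zero
  · refine Or.inr fun hw => ?_
    have hxNU2 := hxNU.2.resolve_left h0
    have hnx : (-x) ∈ F.comp g := (F.comp g).neg_mem hx
    have h := F.aux_hom_inv hnx (neg_ne_zero.mpr h0)
    have heq : Ring.inverse x = -Ring.inverse (-x) :=
      aux_inv_unique (by
        rw [show x * -Ring.inverse (-x) = (-x) * Ring.inverse (-x) by ring, h.1])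
    exact hxNU2 (heq ▸ S.neg_mem hw)

lemma aux_NU_add {Amb S : Subring K} (hle : S ≤ Amb)
    (hval : ∀ x ∈ Amb, F.Homogeneous x → x ≠ 0 → (x ∈ S ∨ Ring.inverse x ∈ S))
    (hinv : ∀ x ∈ Amb, F.Homogeneous x → x ≠ 0 → Ring.inverse x ∈ Amb)
    {g : H} {x y : K} (hx : x ∈ F.comp g) (hy : y ∈ F.comp g)
    (hxNU : x ∈ auxNU S) (hyNU : y ∈ auxNU S) : x + y ∈ auxNU S := by
  by_cases hx0 : x = 0
  · subst hx0; rwa [zero_add]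
  by_cases hy0 : y = 0
  · subst hy0; rwa [add_zero]
  obtain ⟨hxS, hxI⟩ := hxNU
  obtain ⟨hyS, hyI⟩ := hyNU
  have hxI := hxI.resolve_left hx0
  have hyI := hyI.resolve_left hy0
  obtain ⟨hyinv1, hyinvc, hyinv0⟩ := F.aux_hom_inv hy hy0
  obtain ⟨hxinv1, hxinvc, hxinv0⟩ := F.aux_hom_inv hx hx0
  have hyinv1' : Ring.inverse y * y = 1 := by rw [mul_comm]; exact hyinv1
  have hxinv1' : Ring.inverse x * x = 1 := by rw [mul_comm]; exact hxinv1
  set t := x * Ring.inverse y with ht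
  have htc : t ∈ F.comp (g * g⁻¹) := F.mul_mem hx hyinvc
  have ht1 : t * (y * Ring.inverse x) = 1 := by
    rw [show t * (y * Ring.inverse x) = (x * Ring.inverse x) * (y * Ring.inverse y) by rw [ht]; ring,
      hxinv1, hyinv1, one_mul]
  have ht0 : t ≠ 0 := by
    intro h
    rw [h, zero_mul] at ht1
    exact F.zero_ne_one ht1
  have htAmb : t ∈ Amb := Amb.mul_mem (hle hxS) (hinv y (hle hyS) ⟨g, hy⟩ hy0)
  have hsum : x + y ∈ F.comp g := (F.comp g).add_mem hx hy
  rcases hval t htAmb ⟨_, htc⟩ ht0 with htS | htS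
  · have hxy : x + y = (t + 1) * y := by
      rw [ht, add_mul, one_mul, mul_assoc, hyinv1', mul_one]
    refine ⟨by rw [hxy]; exact S.mul_mem (S.add_mem htS S.one_mem) hyS, ?_⟩
    by_cases hs0 : x + y = 0
    · exact Or.inl hs0
    refine Or.inr fun hw => ?_
    obtain ⟨hs1, -, -⟩ := F.aux_hom_inv hsum hs0
    have heq : Ring.inverse y = (t + 1) * Ring.inverse (x + y) :=
      aux_inv_unique (by
        rw [show y * ((t + 1) * Ring.inverse (x + y)) = ((t + 1) * y) * Ring.inverse (x + y) by ring,
          ← hxy, hs1])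
    exact hyI (heq ▸ S.mul_mem (S.add_mem htS S.one_mem) hw)
  · have ht' : Ring.inverse t = y * Ring.inverse x := aux_inv_unique ht1
    have hxy : x + y = (1 + Ring.inverse t) * x := by
      rw [ht', add_mul, one_mul, mul_assoc, show y * (Ring.inverse x * x) = y * 1 by rw [hxinv1'],
        mul_one, add_comm]
    refine ⟨by rw [hxy]; exact S.mul_mem (S.add_mem S.one_mem htS) hxS, ?_⟩
    by_cases hs0 : x + y = 0
    · exact Or.inl hs0
    refine Or.inr fun hw => ?_
    obtain ⟨hs1, -, -⟩ := F.aux_hom_inv hsum hs0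
    have heq : Ring.inverse x = (1 + Ring.inverse t) * Ring.inverse (x + y) :=
      aux_inv_unique (by
        rw [show x * ((1 + Ring.inverse t) * Ring.inverse (x + y)) =
          ((1 + Ring.inverse t) * x) * Ring.inverse (x + y) by ring, ← hxy, hs1])
    exact hxI (heq ▸ S.mul_mem (S.add_mem S.one_mem htS) hw)

/-- Graded automorphisms commute with taking components. -/
lemma aux_aut_cmp {σ : RingAut K} (hσ : F.IsGradedAut σ) (g : H) (z : K) :
    σ (F.component g z) = F.component g (σ z) := by
  classical
  obtain ⟨s, hout, hrep⟩ := F.aux_exists_rep z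
  have hσz : σ z = ∑ u ∈ s, σ (F.component u z) := by
    conv_lhs => rw [hrep]
    rw [map_sum]
  symm
  calc F.component g (σ z) = ∑ u ∈ s, F.component g (σ (F.component u z)) := by
        rw [hσz, ← cmpHom_apply, map_sum]; rfl
  _ = ∑ u ∈ s, if u = g then σ (F.component u z) else 0 := by
        refine Finset.sum_congr rfl fun u _ => ?_
        have hmem : σ (F.component u z) ∈ F.comp u := hσ u _ (F.aux_cmp_mem u z)
        by_cases hu : u = g
        · subst hu; rw [if_pos rfl, F.aux_cmp_of_mem hmem]
        · rw [if_neg hu]; exact F.aux_cmp_of_ne hmem fun h => hu h.symm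
  _ = if g ∈ s then σ (F.component g z) else 0 := Finset.sum_ite_eq' s _ _
  _ = σ (F.component g z) := by
        by_cases hs : g ∈ s
        · rw [if_pos hs]
        · rw [if_neg hs, hout g hs, map_zero]

end GradedField
namespace GradedField

variable {K : Type*} [CommRing K]

/-- Elements expressible as `∑ cₖ uᵏ` with `cₖ ∈ I`, `k ≤ n`. -/
def auxT (I : AddSubgroup K) (u : K) (n : ℕ) : AddSubgroup K :=
  AddSubgroup.closure {z : K | ∃ c ∈ I, ∃ k ≤ n, z = c * u ^ k}

lemma auxT_mono (I : AddSubgroup K) (u : K) {n n' : ℕ} (h : n ≤ n') :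
    auxT I u n ≤ auxT I u n' :=
  AddSubgroup.closure_mono fun z => fun ⟨c, hc, k, hk, hz⟩ => ⟨c, hc, k, hk.trans h, hz⟩

lemma auxT_extract {I : AddSubgroup K} {u : K} {n : ℕ} {z : K} (hz : z ∈ auxT I u n) :
    ∃ c : ℕ → K, (∀ k, c k ∈ I) ∧ ∑ k ∈ Finset.range (n + 1), c k * u ^ k = z := by
  induction hz using AddSubgroup.closure_induction with
  | mem z hzm =>
    obtain ⟨c0, hc0, k, hk, rfl⟩ := hzm
    refine ⟨fun j => if j = k then c0 else 0, fun j => ?_, ?_⟩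
    · by_cases h : j = k
      · simp [h, hc0]
      · simp [h, I.zero_mem]
    · have : ∀ j, (if j = k then c0 else 0) * u ^ j = if j = k then c0 * u ^ j else 0 := by
        intro j; by_cases h : j = k <;> simp [h]
      rw [Finset.sum_congr rfl fun j _ => this j, Finset.sum_ite_eq' (Finset.range (n + 1)) k
        (fun j => c0 * u ^ j), if_pos (Finset.mem_range.mpr (Nat.lt_succ_of_le hk))]
  | zero => exact ⟨fun _ => 0, fun _ => I.zero_mem, by simp only [zero_mul, Finset.sum_const_zero]⟩
  | add a b _ _ iha ihb =>
    obtain ⟨c, hc, hceq⟩ := iha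
    obtain ⟨e, he, heeq⟩ := ihb
    refine ⟨fun k => c k + e k, fun k => I.add_mem (hc k) (he k), ?_⟩
    rw [← hceq, ← heeq, ← Finset.sum_add_distrib]
    exact Finset.sum_congr rfl fun k _ => add_mul _ _ _
  | neg a _ iha =>
    obtain ⟨c, hc, hceq⟩ := iha
    refine ⟨fun k => -(c k), fun k => I.neg_mem (hc k), ?_⟩
    rw [← hceq, ← Finset.sum_neg_distrib]
    exact Finset.sum_congr rfl fun k _ => neg_mul _ _

lemma auxT_zero_case {I : AddSubgroup K} {u : K} (h : (1 : K) ∈ auxT I u 0) : (1 : K) ∈ I := by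
  obtain ⟨c, hc, hceq⟩ := auxT_extract h
  rw [zero_add, Finset.sum_range_one, pow_zero, mul_one] at hceq
  exact hceq ▸ hc 0

lemma auxT_step {I : AddSubgroup K} (hII : ∀ x ∈ I, ∀ y ∈ I, x * y ∈ I)
    {u v : K} (huv : u * v = 1) {n m : ℕ} (hm1 : 1 ≤ m) (hmn : m ≤ n)
    (hu : (1 : K) ∈ auxT I u n) (hv : (1 : K) ∈ auxT I v m) :
    (1 : K) ∈ auxT I u (n - 1) := by
  obtain ⟨c, hc, hceq⟩ := auxT_extract hu
  obtain ⟨e, he, heeq⟩ := auxT_extract hv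
  have hn1 : 1 ≤ n := hm1.trans hmn
  have hpow : ∀ j ≤ n, u ^ n * v ^ j = u ^ (n - j) := by
    intro j hj
    have h1 : u ^ (n - j) * (u ^ j * v ^ j) = u ^ n * v ^ j := by
      rw [← mul_assoc, ← pow_add, Nat.sub_add_cancel hj]
    rw [← h1, ← mul_pow, huv, one_pow, mul_one]
  have key1 : u ^ n = e 0 * u ^ n + ∑ j ∈ Finset.Ico 1 (m + 1), e j * u ^ (n - j) := by
    calc u ^ n = u ^ n * ∑ j ∈ Finset.range (m + 1), e j * v ^ j := by rw [heeq, mul_one]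
    _ = ∑ j ∈ Finset.range (m + 1), e j * (u ^ n * v ^ j) := by
        rw [Finset.mul_sum]; exact Finset.sum_congr rfl fun j _ => by ring
    _ = ∑ j ∈ Finset.range (m + 1), e j * u ^ (n - j) := by
        refine Finset.sum_congr rfl fun j hj => ?_
        rw [hpow j ((Nat.lt_succ_iff.mp (Finset.mem_range.mp hj)).trans hmn)]
    _ = e 0 * u ^ (n - 0) + ∑ j ∈ Finset.Ico (0 + 1) (m + 1), e j * u ^ (n - j) := by
        rw [Finset.range_eq_Ico]
        exact Finset.sum_eq_sum_Ico_succ_bot (Nat.succ_pos m) _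
    _ = e 0 * u ^ n + ∑ j ∈ Finset.Ico 1 (m + 1), e j * u ^ (n - j) := by norm_num
  have h2 : ∑ k ∈ Finset.range n, c k * u ^ k = 1 - c n * u ^ n := by
    have h := hceq
    rw [Finset.sum_range_succ] at h
    exact eq_sub_of_add_eq h
  have h3 : ∑ j ∈ Finset.Ico 1 (m + 1), e j * u ^ (n - j) = u ^ n - e 0 * u ^ n := by
    refine eq_sub_of_add_eq ?_
    rw [add_comm]
    exact key1.symm
  have h4 : ∑ k ∈ Finset.range n, ((1 - e 0) * c k) * u ^ k = (1 - e 0) * (1 - c n * u ^ n) := by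
    rw [← h2, Finset.mul_sum]
    exact Finset.sum_congr rfl fun k _ => by ring
  have h5 : ∑ j ∈ Finset.Ico 1 (m + 1), (c n * e j) * u ^ (n - j) = c n * (u ^ n - e 0 * u ^ n) := by
    rw [← h3, Finset.mul_sum]
    exact Finset.sum_congr rfl fun j _ => by ring
  have main : (1 : K) = e 0 + (∑ k ∈ Finset.range n, ((1 - e 0) * c k) * u ^ k)
      + ∑ j ∈ Finset.Ico 1 (m + 1), (c n * e j) * u ^ (n - j) := by
    rw [h4, h5]; ring
  rw [main]
  refine AddSubgroup.add_mem _ (AddSubgroup.add_mem _ ?_ ?_) ?_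
  · exact AddSubgroup.subset_closure ⟨e 0, he 0, 0, Nat.zero_le _, by rw [pow_zero, mul_one]⟩
  · refine AddSubgroup.sum_mem _ fun k hk => ?_
    refine AddSubgroup.subset_closure ⟨(1 - e 0) * c k, ?_, k,
      Nat.le_pred_of_lt (Finset.mem_range.mp hk), rfl⟩
    rw [one_sub_mul]
    exact I.sub_mem (hc k) (hII _ (he 0) _ (hc k))
  · refine AddSubgroup.sum_mem _ fun j hj => ?_
    have hj1 : 1 ≤ j := (Finset.mem_Ico.mp hj).1
    exact AddSubgroup.subset_closure ⟨c n * e j, hII _ (hc n) _ (he j), n - j,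
      Nat.sub_le_sub_left hj1 n, rfl⟩

lemma aux_descent {I : AddSubgroup K} (hII : ∀ x ∈ I, ∀ y ∈ I, x * y ∈ I)
    {u v : K} (huv : u * v = 1)
    (hu : ∃ n : ℕ, (1 : K) ∈ auxT I u n) (hv : ∃ m : ℕ, (1 : K) ∈ auxT I v m) :
    (1 : K) ∈ I := by
  obtain ⟨n, hn⟩ := hu
  obtain ⟨m, hm⟩ := hv
  have main : ∀ N n m : ℕ, n + m ≤ N → (1 : K) ∈ auxT I u n → (1 : K) ∈ auxT I v m →
      (1 : K) ∈ I := by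
    intro N
    induction N with
    | zero =>
      intro n m hnm hn _
      have : n = 0 := by omega
      exact auxT_zero_case (this ▸ hn)
    | succ N ih =>
      intro n m hnm hn hm
      rcases Nat.eq_zero_or_pos n with rfl | hn1
      · exact auxT_zero_case hn
      rcases Nat.eq_zero_or_pos m with rfl | hm1
      · exact auxT_zero_case hm
      rcases le_total m n with h | h
      · exact ih (n - 1) m (by omega) (auxT_step hII huv hm1 h hn hm) hm
      · have hvu : v * u = 1 := by rwa [mul_comm]
        exact ih n (m - 1) (by omega) hn (auxT_step hII hvu hn1 h hm hn)
  exact main (n + m) n m le_rfl hn hm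

end GradedField
namespace GradedField

variable {H : Type*} [CommGroup H] [DecidableEq H] {K : Type*} [CommRing K] (F : GradedField H K)

/-- The homogeneous "maximal ideal" generators coming from `A'` and from `R`. -/
@[reducible] def auxM (R A' : Subring K) : Set K :=
  {x : K | F.Homogeneous x ∧ x ∈ auxNU A'} ∪ {x : K | F.Homogeneous x ∧ x ∈ auxNU R}

/-- The ideal-like additive subgroup generated by `auxM` over a subring `B`. -/
@[reducible] def auxI (R A' B : Subring K) : AddSubgroup K :=
  AddSubgroup.closure {z : K | ∃ b ∈ B, ∃ m ∈ F.auxM R A', z = b * m}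

/-- Candidate subrings for the Zorn argument. -/
@[reducible] def auxSS (R A' : Subring K) : Set (Subring K) :=
  {B : Subring K | F.IsGradedSubring B ∧ R ≤ B ∧ B ≤ A' ∧ F.auxM R A' ⊆ (B : Set K) ∧
    (1 : K) ∉ F.auxI R A' B}

lemma auxI_mono (R A' : Subring K) {B B' : Subring K} (h : B ≤ B') :
    F.auxI R A' B ≤ F.auxI R A' B' :=
  AddSubgroup.closure_mono fun _ ⟨b, hb, m, hm, hz⟩ => ⟨b, h hb, m, hm, hz⟩

lemma auxI_mul (R A' : Subring K) (B : Subring K) (hMB : F.auxM R A' ⊆ (B : Set K)) :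
    ∀ x ∈ F.auxI R A' B, ∀ y ∈ F.auxI R A' B, x * y ∈ F.auxI R A' B := by
  intro x hx
  induction hx using AddSubgroup.closure_induction with
  | mem x hxm =>
    intro y hy
    induction hy using AddSubgroup.closure_induction with
    | mem y hym =>
      obtain ⟨b, hb, m, hm, rfl⟩ := hxm
      obtain ⟨b', hb', m', hm', rfl⟩ := hym
      exact AddSubgroup.subset_closure
        ⟨b * b' * m, B.mul_mem (B.mul_mem hb hb') (hMB hm), m', hm', by ring⟩
    | zero => rw [mul_zero]; exact (F.auxI R A' B).zero_mem
    | add a b _ _ iha ihb => rw [mul_add]; exact (F.auxI R A' B).add_mem iha ihb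
    | neg a _ iha => rw [mul_neg]; exact (F.auxI R A' B).neg_mem iha
  | zero => intro y _; rw [zero_mul]; exact (F.auxI R A' B).zero_mem
  | add a b _ _ iha ihb =>
    intro y hy; rw [add_mul]; exact (F.auxI R A' B).add_mem (iha y hy) (ihb y hy)
  | neg a _ iha => intro y hy; rw [neg_mul]; exact (F.auxI R A' B).neg_mem (iha y hy)

end GradedField
namespace GradedField

variable {H : Type*} [CommGroup H] [DecidableEq H] {K : Type*} [CommRing K] (F : GradedField H K)

/-- Component shape for elements of the base ring `B₀`. -/
@[reducible] def auxY (R A' : Subring K) (g : H) (z : K) : Prop :=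
  ∃ r a : K, r ∈ F.comp g ∧ r ∈ R ∧ a ∈ F.comp g ∧ a ∈ auxNU A' ∧ z = r + a

/-- Component shape for elements of the ideal `I B₀`. -/
@[reducible] def auxZ (R A' : Subring K) (g : H) (z : K) : Prop :=
  ∃ r a : K, r ∈ F.comp g ∧ r ∈ auxNU R ∧ a ∈ F.comp g ∧ a ∈ auxNU A' ∧ z = r + a

section YZ

variable {R A' : Subring K}

lemma auxY_zero (g : H) : F.auxY R A' g 0 :=
  ⟨0, 0, (F.comp g).zero_mem, R.zero_mem, (F.comp g).zero_mem, auxNU_zero A', (add_zero 0).symm⟩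

lemma auxZ_zero (g : H) : F.auxZ R A' g 0 :=
  ⟨0, 0, (F.comp g).zero_mem, auxNU_zero R, (F.comp g).zero_mem, auxNU_zero A', (add_zero 0).symm⟩

lemma auxY_add (haddA' : ∀ {g : H} {x y : K}, x ∈ F.comp g → y ∈ F.comp g →
    x ∈ auxNU A' → y ∈ auxNU A' → x + y ∈ auxNU A')
    {g : H} {x y : K} (hx : F.auxY R A' g x) (hy : F.auxY R A' g y) :
    F.auxY R A' g (x + y) := by
  obtain ⟨r, a, hrc, hrR, hac, haN, rfl⟩ := hx
  obtain ⟨r', a', hrc', hrR', hac', haN', rfl⟩ := hy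
  exact ⟨r + r', a + a', (F.comp g).add_mem hrc hrc', R.add_mem hrR hrR',
    (F.comp g).add_mem hac hac', haddA' hac hac' haN haN', by ring⟩

lemma auxZ_add (haddA' : ∀ {g : H} {x y : K}, x ∈ F.comp g → y ∈ F.comp g →
    x ∈ auxNU A' → y ∈ auxNU A' → x + y ∈ auxNU A')
    (haddR : ∀ {g : H} {x y : K}, x ∈ F.comp g → y ∈ F.comp g →
    x ∈ auxNU R → y ∈ auxNU R → x + y ∈ auxNU R)
    {g : H} {x y : K} (hx : F.auxZ R A' g x) (hy : F.auxZ R A' g y) :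
    F.auxZ R A' g (x + y) := by
  obtain ⟨r, a, hrc, hrR, hac, haN, rfl⟩ := hx
  obtain ⟨r', a', hrc', hrR', hac', haN', rfl⟩ := hy
  exact ⟨r + r', a + a', (F.comp g).add_mem hrc hrc', haddR hrc hrc' hrR hrR',
    (F.comp g).add_mem hac hac', haddA' hac hac' haN haN', by ring⟩

lemma auxY_neg {g : H} {x : K} (hx : F.auxY R A' g x) : F.auxY R A' g (-x) := by
  obtain ⟨r, a, hrc, hrR, hac, haN, rfl⟩ := hx
  exact ⟨-r, -a, (F.comp g).neg_mem hrc, R.neg_mem hrR, (F.comp g).neg_mem hac,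
    F.aux_NU_neg hac haN, by ring⟩

lemma auxZ_neg {g : H} {x : K} (hx : F.auxZ R A' g x) : F.auxZ R A' g (-x) := by
  obtain ⟨r, a, hrc, hrR, hac, haN, rfl⟩ := hx
  exact ⟨-r, -a, (F.comp g).neg_mem hrc, F.aux_NU_neg hrc hrR, (F.comp g).neg_mem hac,
    F.aux_NU_neg hac haN, by ring⟩

lemma auxY_mul (haddA' : ∀ {g : H} {x y : K}, x ∈ F.comp g → y ∈ F.comp g →
    x ∈ auxNU A' → y ∈ auxNU A' → x + y ∈ auxNU A')
    (hRA' : R ≤ A') {u v : H} {x y : K} (hx : F.auxY R A' u x) (hy : F.auxY R A' v y) :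
    F.auxY R A' (u * v) (x * y) := by
  obtain ⟨r, a, hrc, hrR, hac, haN, rfl⟩ := hx
  obtain ⟨r', a', hrc', hrR', hac', haN', rfl⟩ := hy
  have h1 : r * a' ∈ auxNU A' := F.aux_NU_mul hrc (hRA' hrR) hac' haN'
  have h2 : a * r' ∈ auxNU A' := by
    have h := F.aux_NU_mul hrc' (hRA' hrR') hac haN
    rwa [mul_comm] at h
  have h3 : a * a' ∈ auxNU A' := F.aux_NU_mul hac haN.1 hac' haN'
  refine ⟨r * r', r * a' + (a * r' + a * a'), F.mul_mem hrc hrc', R.mul_mem hrR hrR',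
    (F.comp (u * v)).add_mem (F.mul_mem hrc hac')
      ((F.comp (u * v)).add_mem (F.mul_mem hac hrc') (F.mul_mem hac hac')), ?_, by ring⟩
  exact haddA' (F.mul_mem hrc hac')
    ((F.comp (u * v)).add_mem (F.mul_mem hac hrc') (F.mul_mem hac hac')) h1
    (haddA' (F.mul_mem hac hrc') (F.mul_mem hac hac') h2 h3)

/-- Components of elements of the base ring `B₀` have shape `auxY`. -/
lemma auxB0_component (haddA' : ∀ {g : H} {x y : K}, x ∈ F.comp g → y ∈ F.comp g →
    x ∈ auxNU A' → y ∈ auxNU A' → x + y ∈ auxNU A')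
    (hRA' : R ≤ A') :
    ∀ b ∈ Subring.closure ({x : K | x ∈ R ∧ F.Homogeneous x} ∪ F.auxM R A'),
      ∀ g : H, F.auxY R A' g (F.component g b) := by
  intro b hb
  induction hb using Subring.closure_induction with
  | mem y hy =>
    intro g
    rcases hy with ⟨hyR, d, hd⟩ | hm
    · by_cases hgd : g = d
      · rw [F.aux_cmp_of_mem (show y ∈ F.comp g from hgd ▸ hd)]
        exact ⟨y, 0, hgd ▸ hd, hyR, (F.comp g).zero_mem, auxNU_zero A', (add_zero y).symm⟩
      · rw [F.aux_cmp_of_ne hd hgd]; exact F.auxY_zero g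
    · rcases hm with ⟨⟨d, hd⟩, hN⟩ | ⟨⟨d, hd⟩, hN⟩
      · by_cases hgd : g = d
        · rw [F.aux_cmp_of_mem (show y ∈ F.comp g from hgd ▸ hd)]
          exact ⟨0, y, (F.comp g).zero_mem, R.zero_mem, hgd ▸ hd, hN, (zero_add y).symm⟩
        · rw [F.aux_cmp_of_ne hd hgd]; exact F.auxY_zero g
      · by_cases hgd : g = d
        · rw [F.aux_cmp_of_mem (show y ∈ F.comp g from hgd ▸ hd)]
          exact ⟨y, 0, hgd ▸ hd, hN.1, (F.comp g).zero_mem, auxNU_zero A', (add_zero y).symm⟩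
        · rw [F.aux_cmp_of_ne hd hgd]; exact F.auxY_zero g
  | one =>
    intro g
    by_cases hg : g = 1
    · rw [F.aux_cmp_of_mem (show (1 : K) ∈ F.comp g from hg ▸ F.one_mem)]
      exact ⟨1, 0, hg ▸ F.one_mem, R.one_mem, (F.comp g).zero_mem, auxNU_zero A',
        (add_zero 1).symm⟩
    · rw [F.aux_cmp_of_ne F.one_mem hg]; exact F.auxY_zero g
  | zero => intro g; rw [F.aux_cmp_zero]; exact F.auxY_zero g
  | add a b _ _ iha ihb =>
    intro g; rw [F.aux_cmp_add]; exact F.auxY_add haddA' (iha g) (ihb g)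
  | neg a _ iha =>
    intro g
    rw [show F.component g (-a) = -F.component g a from map_neg (F.cmpHom g) a]
    exact F.auxY_neg (iha g)
  | mul a b _ _ iha ihb =>
    intro g
    obtain ⟨s, hout, hrep⟩ := F.aux_exists_rep b
    have hab : F.component g (a * b) = ∑ v ∈ s, F.component (g * v⁻¹) a * F.component v b := by
      have h1 : a * b = ∑ v ∈ s, a * F.component v b := by
        conv_lhs => rw [hrep]
        rw [Finset.mul_sum]
      rw [h1, ← cmpHom_apply, map_sum]
      exact Finset.sum_congr rfl fun v _ => F.aux_proj (F.aux_cmp_mem v b) a g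
    rw [hab]
    refine Finset.sum_induction _ (F.auxY R A' g) (fun x y hx hy => F.auxY_add haddA' hx hy)
      (F.auxY_zero g) fun v _ => ?_
    have h := F.auxY_mul haddA' hRA' (iha (g * v⁻¹)) (ihb v)
    rwa [inv_mul_cancel_right] at h

/-- Key step 1: the unit is not in the ideal over the base ring. -/
lemma aux_crux1 (haddA' : ∀ {g : H} {x y : K}, x ∈ F.comp g → y ∈ F.comp g →
    x ∈ auxNU A' → y ∈ auxNU A' → x + y ∈ auxNU A')
    (haddR : ∀ {g : H} {x y : K}, x ∈ F.comp g → y ∈ F.comp g →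
    x ∈ auxNU R → y ∈ auxNU R → x + y ∈ auxNU R)
    (hRA' : R ≤ A') (L : Subring K) (hRL : R ≤ L)
    (hR3 : ∀ x ∈ L, F.Homogeneous x → x ≠ 0 → (x ∈ R ∨ Ring.inverse x ∈ R)) :
    (1 : K) ∉ F.auxI R A'
      (Subring.closure ({x : K | x ∈ R ∧ F.Homogeneous x} ∪ F.auxM R A')) := by
  intro h1
  have hPZ : ∀ z ∈ F.auxI R A'
      (Subring.closure ({x : K | x ∈ R ∧ F.Homogeneous x} ∪ F.auxM R A')),
      ∀ g : H, F.auxZ R A' g (F.component g z) := by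
    intro z hz
    induction hz using AddSubgroup.closure_induction with
    | mem z hzm =>
      obtain ⟨b, hb, m, hm, rfl⟩ := hzm
      intro g
      obtain ⟨d, hd⟩ := (by rcases hm with ⟨h, -⟩ | ⟨h, -⟩ <;> exact h : F.Homogeneous m)
      rw [F.aux_proj hd b g]
      obtain ⟨r, a, hrc, hrR, hac, haN, heq⟩ := F.auxB0_component haddA' hRA' b hb (g * d⁻¹)
      rw [heq, add_mul]
      have hgd : g * d⁻¹ * d = g := inv_mul_cancel_right g d
      have hrm : r * m ∈ F.comp g := by rw [← hgd]; exact F.mul_mem hrc hd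
      have ham : a * m ∈ F.comp g := by rw [← hgd]; exact F.mul_mem hac hd
      rcases hm with ⟨-, hmN⟩ | ⟨-, hmN⟩
      · have h1 : r * m ∈ auxNU A' := F.aux_NU_mul hrc (hRA' hrR) hd hmN
        have h2 : a * m ∈ auxNU A' := F.aux_NU_mul hac haN.1 hd hmN
        exact ⟨0, r * m + a * m, (F.comp g).zero_mem, auxNU_zero R,
          (F.comp g).add_mem hrm ham, haddA' hrm ham h1 h2, (zero_add _).symm⟩
      · have h1 : r * m ∈ auxNU R := F.aux_NU_mul hrc hrR hd hmN
        have h2 : a * m ∈ auxNU A' := by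
          have h := F.aux_NU_mul hd (hRA' hmN.1) hac haN
          rwa [mul_comm] at h
        exact ⟨r * m, a * m, hrm, h1, ham, h2, rfl⟩
    | zero => intro g; rw [F.aux_cmp_zero]; exact F.auxZ_zero g
    | add a b _ _ iha ihb =>
      intro g; rw [F.aux_cmp_add]; exact F.auxZ_add haddA' haddR (iha g) (ihb g)
    | neg a _ iha =>
      intro g
      rw [show F.component g (-a) = -F.component g a from map_neg (F.cmpHom g) a]
      exact F.auxZ_neg (iha g)
  have h11 := hPZ 1 h1 1
  rw [F.aux_cmp_of_mem F.one_mem] at h11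
  obtain ⟨s, a, hsc, hsN, hac, haN, heq⟩ := h11
  have haL : a ∈ L := by
    have h : a = 1 - s := by rw [heq]; ring
    rw [h]
    exact L.sub_mem L.one_mem (hRL hsN.1)
  have haR : a ∈ auxNU R := by
    by_cases ha0 : a = 0
    · exact ha0 ▸ auxNU_zero R
    · have hNA' := haN.2.resolve_left ha0
      rcases hR3 a haL ⟨1, hac⟩ ha0 with haR | haR
      · exact ⟨haR, Or.inr fun hc => hNA' (hRA' hc)⟩
      · exact absurd (hRA' haR) hNA'
  have hone : (1 : K) ∈ auxNU R := heq ▸ haddR hsc hac hsN haR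
  have h10 : (1 : K) ≠ 0 := Ne.symm F.zero_ne_one
  have h := hone.2.resolve_left h10
  rw [Ring.inverse_one] at h
  exact h R.one_mem

end YZ

end GradedField

set_option maxHeartbeats 1000000 in
/-- Let `K` be an `H`-graded field, `G` a finite group of graded automorphisms, `L = K^G`,
`R ⊆ R'` graded valuation rings of `L`, and `A'` a graded valuation ring of `K` extending
`R'`.  Then there is a graded valuation ring `A` of `K` extending `R` with `A ⊆ A'`. -/
theorem GradedField.exists_extension_le {H : Type*} [CommGroup H] [DecidableEq H]
    {K : Type*} [CommRing K] (F : GradedField H K) (G : Subgroup (RingAut K)) [Finite G]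
    (hG : ∀ σ ∈ G, F.IsGradedAut σ) (R R' : Subring K)
    (hR : F.IsGradedValRing (fixedSubring G) R) (hR' : F.IsGradedValRing (fixedSubring G) R')
    (hRR' : R ≤ R') (A' : Subring K) (hA' : F.IsGradedValRing ⊤ A')
    (hA'ext : A' ⊓ fixedSubring G = R') :
    ∃ A : Subring K, (F.IsGradedValRing ⊤ A ∧ A ⊓ fixedSubring G = R) ∧ A ≤ A' := by
  classical
  obtain ⟨hR1, hR2, hR3⟩ := hR
  obtain ⟨-, hA'2, hA'3⟩ := hA'
  have hR'A' : R' ≤ A' := by rw [← hA'ext]; exact inf_le_left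
  have hRA' : R ≤ A' := hRR'.trans hR'A'
  have hRL : R ≤ fixedSubring G := hR1
  -- the fixed ring is closed under homogeneous inverses
  have hinvL : ∀ x ∈ fixedSubring G, F.Homogeneous x → x ≠ 0 →
      Ring.inverse x ∈ fixedSubring G := by
    intro x hxL hh h0
    obtain ⟨g, hg⟩ := hh
    obtain ⟨h1, -, -⟩ := F.aux_hom_inv hg h0
    rw [mem_fixedSubring]
    intro σ hσ
    have h2 : x * σ (Ring.inverse x) = 1 := by
      have h3 := congrArg σ h1
      rw [map_mul, map_one] at h3
      rwa [mem_fixedSubring.mp hxL σ hσ] at h3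
    exact (aux_inv_unique h2).symm
  have hvalA' : ∀ x : K, F.Homogeneous x → x ≠ 0 → (x ∈ A' ∨ Ring.inverse x ∈ A') :=
    fun x hh h0 => hA'3 x (Subring.mem_top x) hh h0
  have addA' : ∀ {g : H} {x y : K}, x ∈ F.comp g → y ∈ F.comp g →
      x ∈ auxNU A' → y ∈ auxNU A' → x + y ∈ auxNU A' :=
    fun hx hy hxN hyN => F.aux_NU_add le_top (fun x _ hh h0 => hvalA' x hh h0)
      (fun x _ _ _ => Subring.mem_top x) hx hy hxN hyN
  have addR : ∀ {g : H} {x y : K}, x ∈ F.comp g → y ∈ F.comp g →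
      x ∈ auxNU R → y ∈ auxNU R → x + y ∈ auxNU R :=
    fun hx hy hxN hyN => F.aux_NU_add hRL hR3 hinvL hx hy hxN hyN
  have hMA' : F.auxM R A' ⊆ (A' : Set K) := by
    rintro x (⟨-, hx, -⟩ | ⟨-, hx, -⟩)
    exacts [hx, hRA' hx]
  have hMhom : ∀ m ∈ F.auxM R A', F.Homogeneous m := by
    rintro m (⟨h, -⟩ | ⟨h, -⟩) <;> exact h
  -- the base ring for the Zorn argument
  have hgenshom : ∀ x ∈ ({x : K | x ∈ R ∧ F.Homogeneous x} ∪ F.auxM R A'), F.Homogeneous x := by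
    rintro x (⟨-, h⟩ | hm)
    exacts [h, hMhom x hm]
  have hRB₀ : R ≤ Subring.closure ({x : K | x ∈ R ∧ F.Homogeneous x} ∪ F.auxM R A') := by
    intro r hr
    have h := hR2 r hr
    exact (AddSubgroup.closure_le (Subring.closure _).toAddSubgroup).mpr
      (fun y hy => Subring.subset_closure (Or.inl ⟨hy.1, hy.2⟩)) h
  have hB₀A' : Subring.closure ({x : K | x ∈ R ∧ F.Homogeneous x} ∪ F.auxM R A') ≤ A' := by
    refine Subring.closure_le.mpr ?_
    rintro x (⟨hx, -⟩ | hm)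
    exacts [hRA' hx, hMA' hm]
  have hMB₀ : F.auxM R A' ⊆
      (Subring.closure ({x : K | x ∈ R ∧ F.Homogeneous x} ∪ F.auxM R A') : Set K) :=
    fun m hm => Subring.subset_closure (Or.inr hm)
  have hB₀SS : Subring.closure ({x : K | x ∈ R ∧ F.Homogeneous x} ∪ F.auxM R A')
      ∈ F.auxSS R A' :=
    ⟨F.aux_closure_graded hgenshom, hRB₀, hB₀A', hMB₀,
      F.aux_crux1 addA' addR hRA' (fixedSubring G) hRL hR3⟩
  -- Zorn's lemma
  have hchain : ∀ c ⊆ F.auxSS R A', IsChain (· ≤ ·) c → ∀ y ∈ c,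
      ∃ ub ∈ F.auxSS R A', ∀ z ∈ c, z ≤ ub := by
    intro c hcSS hc y hyc
    have hne : c.Nonempty := ⟨y, hyc⟩
    have hdir : DirectedOn (· ≤ ·) c := hc.directedOn
    refine ⟨sSup c, ⟨?_, ?_, ?_, ?_, ?_⟩, fun z hz => le_sSup hz⟩
    · intro x hx
      obtain ⟨B', hB'c, hxB'⟩ := (Subring.mem_sSup_of_directedOn hne hdir).mp hx
      have hsub : {y : K | y ∈ B' ∧ F.Homogeneous y} ⊆ {y : K | y ∈ sSup c ∧ F.Homogeneous y} :=
        fun y hy => ⟨le_sSup hB'c hy.1, hy.2⟩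
      exact AddSubgroup.closure_mono hsub ((hcSS hB'c).1 x hxB')
    · exact ((hcSS hyc).2.1).trans (le_sSup hyc)
    · exact sSup_le fun B' hB' => (hcSS hB').2.2.1
    · exact fun m hm =>
        (Subring.mem_sSup_of_directedOn hne hdir).mpr ⟨y, hyc, (hcSS hyc).2.2.2.1 hm⟩
    · intro h1
      have hloc : ∀ z ∈ F.auxI R A' (sSup c), ∃ B' ∈ c, z ∈ F.auxI R A' B' := by
        intro z hz
        induction hz using AddSubgroup.closure_induction with
        | mem z hzm =>
          obtain ⟨b, hb, m, hm, rfl⟩ := hzm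
          obtain ⟨B', hB'c, hbB'⟩ := (Subring.mem_sSup_of_directedOn hne hdir).mp hb
          exact ⟨B', hB'c, AddSubgroup.subset_closure ⟨b, hbB', m, hm, rfl⟩⟩
        | zero => exact ⟨y, hyc, (F.auxI R A' y).zero_mem⟩
        | add a b _ _ iha ihb =>
          obtain ⟨B1, hB1, ha⟩ := iha
          obtain ⟨B2, hB2, hb⟩ := ihb
          obtain ⟨B3, hB3, h13, h23⟩ := hdir B1 hB1 B2 hB2
          exact ⟨B3, hB3, (F.auxI R A' B3).add_mem (F.auxI_mono R A' h13 ha)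
            (F.auxI_mono R A' h23 hb)⟩
        | neg a _ iha =>
          obtain ⟨B1, hB1, ha⟩ := iha
          exact ⟨B1, hB1, (F.auxI R A' B1).neg_mem ha⟩
      obtain ⟨B', hB'c, h1B'⟩ := hloc 1 h1
      exact (hcSS hB'c).2.2.2.2 h1B'
  obtain ⟨B, hB₀B, hBmax⟩ := zorn_le_nonempty₀ (F.auxSS R A') hchain _ hB₀SS
  obtain ⟨hBgr, hRB, hBA', hMB, hB1⟩ := hBmax.1
  have hIBmul := F.auxI_mul R A' B hMB
  -- the maximal ring has the valuation property
  have hval : ∀ x : K, F.Homogeneous x → x ≠ 0 → (x ∈ B ∨ Ring.inverse x ∈ B) := by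
    intro x hx h0
    by_contra hcon
    push_neg at hcon
    obtain ⟨hxB, hxiB⟩ := hcon
    obtain ⟨g, hg⟩ := hx
    obtain ⟨hinv1, hinvc, hinv0⟩ := F.aux_hom_inv hg h0
    have hinvinv : Ring.inverse (Ring.inverse x) = x :=
      aux_inv_unique (by rw [mul_comm]; exact hinv1)
    have hxA' : x ∈ A' := by
      rcases hvalA' x ⟨g, hg⟩ h0 with h | h
      · exact h
      · by_contra hxA'
        exact hxiB (hMB (Or.inl ⟨⟨g⁻¹, hinvc⟩, h, Or.inr fun hc => hxA' (hinvinv ▸ hc)⟩))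
    have hxiA' : Ring.inverse x ∈ A' := by
      by_contra hni
      exact hxB (hMB (Or.inl ⟨⟨g, hg⟩, hxA', Or.inr hni⟩))
    -- enlarging by a homogeneous element of `A'` forces `1` into the ideal
    have hext : ∀ w : K, w ∈ A' → F.Homogeneous w → w ∉ B →
        (1 : K) ∈ F.auxI R A' (Subring.closure (insert w {y : K | y ∈ B ∧ F.Homogeneous y})) := by
      intro w hwA' hwhom hwB
      by_contra h1w
      have hBleBw : B ≤ Subring.closure (insert w {y : K | y ∈ B ∧ F.Homogeneous y}) := by
        intro b hb
        exact (AddSubgroup.closure_le (Subring.closure _).toAddSubgroup).mpr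
          (fun y hy => Subring.subset_closure (Set.mem_insert_of_mem _ hy)) (hBgr b hb)
      have hBwSS : Subring.closure (insert w {y : K | y ∈ B ∧ F.Homogeneous y})
          ∈ F.auxSS R A' := by
        refine ⟨F.aux_closure_graded ?_, hRB.trans hBleBw, ?_,
          fun m hm => hBleBw (hMB hm), h1w⟩
        · rintro x (rfl | ⟨-, hx⟩)
          exacts [hwhom, hx]
        · refine Subring.closure_le.mpr ?_
          rintro x (rfl | ⟨hx, -⟩)
          exacts [hwA', hBA' hx]
      exact hwB (hBmax.2 hBwSS hBleBw (Subring.subset_closure (Set.mem_insert w _)))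
    -- convert membership in the enlarged ideal to a power series representation
    have hconv : ∀ w : K,
        (1 : K) ∈ F.auxI R A' (Subring.closure (insert w {y : K | y ∈ B ∧ F.Homogeneous y})) →
        ∃ n : ℕ, (1 : K) ∈ auxT (F.auxI R A' B) w n := by
      intro w h1w
      have hDmul : ∀ p ∈ AddSubgroup.closure {z : K | ∃ b ∈ B, ∃ k : ℕ, z = b * w ^ k},
          ∀ q ∈ AddSubgroup.closure {z : K | ∃ b ∈ B, ∃ k : ℕ, z = b * w ^ k},
          p * q ∈ AddSubgroup.closure {z : K | ∃ b ∈ B, ∃ k : ℕ, z = b * w ^ k} := by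
        intro p hp
        induction hp using AddSubgroup.closure_induction with
        | mem p hpm =>
          intro q hq
          induction hq using AddSubgroup.closure_induction with
          | mem q hqm =>
            obtain ⟨b, hb, k, rfl⟩ := hpm
            obtain ⟨b', hb', j, rfl⟩ := hqm
            exact AddSubgroup.subset_closure ⟨b * b', B.mul_mem hb hb', k + j,
              by rw [pow_add]; ring⟩
          | zero => rw [mul_zero]; exact AddSubgroup.zero_mem _
          | add a b _ _ iha ihb => rw [mul_add]; exact AddSubgroup.add_mem _ iha ihb
          | neg a _ iha => rw [mul_neg]; exact AddSubgroup.neg_mem _ iha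
        | zero => intro q _; rw [zero_mul]; exact AddSubgroup.zero_mem _
        | add a b _ _ iha ihb =>
          intro q hq; rw [add_mul]; exact AddSubgroup.add_mem _ (iha q hq) (ihb q hq)
        | neg a _ iha => intro q hq; rw [neg_mul]; exact AddSubgroup.neg_mem _ (iha q hq)
      have hsub : ∀ b ∈ Subring.closure (insert w {y : K | y ∈ B ∧ F.Homogeneous y}),
          b ∈ AddSubgroup.closure {z : K | ∃ b' ∈ B, ∃ k : ℕ, z = b' * w ^ k} := by
        intro b hb
        induction hb using Subring.closure_induction with
        | mem y hy =>
          rcases hy with rfl | ⟨hyB, -⟩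
          · exact AddSubgroup.subset_closure ⟨1, B.one_mem, 1, by rw [pow_one, one_mul]⟩
          · exact AddSubgroup.subset_closure ⟨y, hyB, 0, by rw [pow_zero, mul_one]⟩
        | one => exact AddSubgroup.subset_closure ⟨1, B.one_mem, 0, by rw [pow_zero, mul_one]⟩
        | zero => exact AddSubgroup.zero_mem _
        | add a b _ _ iha ihb => exact AddSubgroup.add_mem _ iha ihb
        | neg a _ iha => exact AddSubgroup.neg_mem _ iha
        | mul a b _ _ iha ihb => exact hDmul a iha b ihb
      have hmain : ∀ z ∈ F.auxI R A'
          (Subring.closure (insert w {y : K | y ∈ B ∧ F.Homogeneous y})),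
          ∃ n : ℕ, z ∈ auxT (F.auxI R A' B) w n := by
        intro z hz
        induction hz using AddSubgroup.closure_induction with
        | mem z hzm =>
          obtain ⟨b, hb, m, hm, rfl⟩ := hzm
          have hbD := hsub b hb
          clear hb
          induction hbD using AddSubgroup.closure_induction with
          | mem p hp =>
            obtain ⟨b', hb', k, rfl⟩ := hp
            exact ⟨k, AddSubgroup.subset_closure ⟨b' * m,
              AddSubgroup.subset_closure ⟨b', hb', m, hm, rfl⟩, k, le_rfl, by ring⟩⟩
          | zero => exact ⟨0, by rw [zero_mul]; exact AddSubgroup.zero_mem _⟩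
          | add p q _ _ ihp ihq =>
            obtain ⟨n1, h1⟩ := ihp
            obtain ⟨n2, h2⟩ := ihq
            exact ⟨max n1 n2, by
              rw [add_mul]
              exact AddSubgroup.add_mem _ (auxT_mono _ _ (le_max_left n1 n2) h1)
                (auxT_mono _ _ (le_max_right n1 n2) h2)⟩
          | neg p _ ihp =>
            obtain ⟨n1, h1⟩ := ihp
            exact ⟨n1, by rw [neg_mul]; exact AddSubgroup.neg_mem _ h1⟩
        | zero => exact ⟨0, AddSubgroup.zero_mem _⟩
        | add a b _ _ iha ihb =>
          obtain ⟨n1, h1⟩ := iha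
          obtain ⟨n2, h2⟩ := ihb
          exact ⟨max n1 n2, AddSubgroup.add_mem _ (auxT_mono _ _ (le_max_left n1 n2) h1)
            (auxT_mono _ _ (le_max_right n1 n2) h2)⟩
        | neg a _ iha =>
          obtain ⟨n1, h1⟩ := iha
          exact ⟨n1, AddSubgroup.neg_mem _ h1⟩
      exact hmain 1 h1w
    exact hB1 (aux_descent hIBmul hinv1
      (hconv x (hext x hxA' ⟨g, hg⟩ hxB))
      (hconv (Ring.inverse x) (hext (Ring.inverse x) hxiA' ⟨g⁻¹, hinvc⟩ hxiB)))
  -- conclusion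
  refine ⟨B, ⟨⟨le_top, hBgr, fun x _ hx h0 => hval x hx h0⟩, le_antisymm ?_ ?_⟩, hBA'⟩
  · intro z hz
    rw [Subring.mem_inf] at hz
    obtain ⟨hzB, hzL⟩ := hz
    obtain ⟨s, hout, hrep⟩ := F.aux_exists_rep z
    rw [hrep]
    refine Subring.sum_mem R fun g hg => ?_
    have hwB : F.component g z ∈ B := F.aux_cmp_mem_of_graded hBgr hzB g
    have hwL : F.component g z ∈ fixedSubring G := by
      rw [mem_fixedSubring]
      intro σ hσ
      rw [F.aux_aut_cmp (hG σ hσ) g z, mem_fixedSubring.mp hzL σ hσ]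
    by_contra hwR
    have hw0 : F.component g z ≠ 0 := fun h => hwR (h ▸ R.zero_mem)
    rcases hR3 _ hwL ⟨g, F.aux_cmp_mem g z⟩ hw0 with h | h
    · exact hwR h
    · obtain ⟨hw1, hwc, hwi0⟩ := F.aux_hom_inv (F.aux_cmp_mem g z) hw0
      have hMmem : Ring.inverse (F.component g z) ∈ F.auxM R A' := by
        refine Or.inr ⟨⟨g⁻¹, hwc⟩, h, Or.inr fun hc => ?_⟩
        rw [aux_inv_unique (show Ring.inverse (F.component g z) * F.component g z = 1 by
          rw [mul_comm]; exact hw1)] at hc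
        exact hwR hc
      exact hB1 (AddSubgroup.subset_closure ⟨F.component g z, hwB, _, hMmem, hw1.symm⟩)
  · intro r hr
    exact Subring.mem_inf.mpr ⟨hRB hr, hRL hr⟩
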